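/- Let Y be a locally compact Hausdorff abelian topological group and let β1, …, βn : Y → Y be continuous endomorphisms such that for all i ≠ j the set (β_i − β_j)(Y) is dense in Y. Let ψ1, …, ψn and B be continuous complex-valued functions on Y satisfying ψ1(u + β1 v) + ψ2(u + β2 v) + ⋯ + ψn(u + βn v) = B(v) for all u, v ∈ Y. Then each ψ_j is a polynomial on Y of degree at most n − 1; moreover, if n ≥ 2 and B(y) = 0 for all y ∈ Y, then each ψ_j is a polynomial of degree at most n − 2. -/

import Mathlib

/-- The finite difference operator `Δ_h f(y) = f(y + h) - f(y)`. -/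
def fdiff {Y : Type*} [Add Y] (h : Y) (f : Y → ℂ) : Y → ℂ :=
  fun y => f (y + h) - f y

/-- `f` is a polynomial of degree at most `m`: `Δ_h^{m+1} f ≡ 0` for every `h`. -/
def IsPolynomialOfDegreeAtMost {Y : Type*} [Add Y] (m : ℕ) (f : Y → ℂ) : Prop :=
  ∀ h : Y, ∀ y : Y, (fdiff h)^[m + 1] f y = 0

namespace FEAux

variable {Y : Type*} [AddCommGroup Y]

lemma fdiff_comm (a b : Y) (f : Y → ℂ) : fdiff a (fdiff b f) = fdiff b (fdiff a f) := by
  funext y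
  simp only [fdiff]
  rw [add_right_comm]
  ring

/-- Iterated difference along a list of increments. -/
def mdiffL (l : List Y) (f : Y → ℂ) : Y → ℂ := l.foldr fdiff f

@[simp] lemma mdiffL_nil (f : Y → ℂ) : mdiffL ([] : List Y) f = f := rfl

@[simp] lemma mdiffL_cons (a : Y) (l : List Y) (f : Y → ℂ) :
    mdiffL (a :: l) f = fdiff a (mdiffL l f) := rfl

lemma mdiffL_fdiff (l : List Y) (a : Y) (f : Y → ℂ) :
    mdiffL l (fdiff a f) = fdiff a (mdiffL l f) := by
  induction l with
  | nil => rfl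
  | cons b l ih => simp [ih, fdiff_comm]

lemma mdiffL_perm {l l' : List Y} (h : l.Perm l') (f : Y → ℂ) :
    mdiffL l f = mdiffL l' f := by
  induction h with
  | nil => rfl
  | cons a _ ih => simp [ih]
  | swap a b l => simp [fdiff_comm]
  | trans _ _ ih1 ih2 => rw [ih1, ih2]

variable {ι : Type*} [DecidableEq ι]

/-- Iterated difference with increments `k i`, `i ∈ s`. -/
noncomputable def mdiffS (s : Finset ι) (k : ι → Y) (f : Y → ℂ) : Y → ℂ :=
  mdiffL (s.toList.map k) f

@[simp] lemma mdiffS_empty (k : ι → Y) (f : Y → ℂ) : mdiffS (∅ : Finset ι) k f = f := by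
  simp [mdiffS]

lemma mdiffS_congr {s : Finset ι} {k k' : ι → Y} (h : ∀ i ∈ s, k i = k' i) (f : Y → ℂ) :
    mdiffS s k f = mdiffS s k' f := by
  unfold mdiffS
  rw [List.map_congr_left fun i hi => h i (Finset.mem_toList.mp hi)]

lemma mdiffS_erase {s : Finset ι} {i : ι} (hi : i ∈ s) (k : ι → Y) (f : Y → ℂ) :
    mdiffS s k f = fdiff (k i) (mdiffS (s.erase i) k f) := by
  have h1 : s = insert i (s.erase i) := (Finset.insert_erase hi).symm
  have hperm : (insert i (s.erase i)).toList.Perm (i :: (s.erase i).toList) :=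
    Finset.toList_insert (Finset.notMem_erase i s)
  calc mdiffS s k f = mdiffL ((insert i (s.erase i)).toList.map k) f := by
        rw [← h1]; rfl
    _ = mdiffL ((i :: (s.erase i).toList).map k) f := mdiffL_perm (hperm.map k) f
    _ = fdiff (k i) (mdiffS (s.erase i) k f) := rfl

lemma mdiffS_erase' {s : Finset ι} {i : ι} (hi : i ∈ s) (k : ι → Y) (f : Y → ℂ) :
    mdiffS s k f = mdiffS (s.erase i) k (fdiff (k i) f) := by
  rw [mdiffS_erase hi]
  unfold mdiffS
  rw [mdiffL_fdiff]

lemma mdiffL_replicate (m : ℕ) (h : Y) (f : Y → ℂ) :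
    mdiffL (List.replicate m h) f = (fdiff h)^[m] f := by
  induction m with
  | zero => rfl
  | succ m ih => rw [List.replicate_succ, mdiffL_cons, ih, Function.iterate_succ_apply']

lemma mdiffS_const (s : Finset ι) (h : Y) (f : Y → ℂ) :
    mdiffS s (fun _ => h) f = (fdiff h)^[s.card] f := by
  unfold mdiffS
  rw [List.map_const', Finset.length_toList, mdiffL_replicate]

section Topology

variable [TopologicalSpace Y] [IsTopologicalAddGroup Y]

lemma continuous_fdiff (a : Y) {f : Y → ℂ} (hf : Continuous f) : Continuous (fdiff a f) :=
  (hf.comp (continuous_id.add continuous_const)).sub hf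

lemma continuous_mdiffL_param (l : List Y) {F : Y → Y → ℂ}
    (hF : Continuous fun p : Y × Y => F p.1 p.2) :
    Continuous fun p : Y × Y => mdiffL l (F p.1) p.2 := by
  induction l with
  | nil => exact hF
  | cons a l ih =>
    have h1 : Continuous fun p : Y × Y => mdiffL l (F p.1) (p.2 + a) :=
      ih.comp (continuous_fst.prodMk (continuous_snd.add continuous_const))
    exact h1.sub ih

/-- Dense-extension lemma: if all mixed differences of a continuous `f` with increments
from dense sets vanish, then so do all mixed differences with arbitrary increments. -/
lemma ext_dense (s : Finset ι) (D : ι → Set Y) (hD : ∀ i ∈ s, Dense (D i))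
    {f : Y → ℂ} (hf : Continuous f)
    (H : ∀ k : ι → Y, (∀ i ∈ s, k i ∈ D i) → ∀ u, mdiffS s k f u = 0) :
    ∀ (k : ι → Y) (u : Y), mdiffS s k f u = 0 := by
  have claim : ∀ t : Finset ι, ∀ k : ι → Y,
      (∀ i ∈ s, i ∉ t → k i ∈ D i) → ∀ u, mdiffS s k f u = 0 := by
    intro t
    induction t using Finset.induction_on with
    | empty => exact fun k hk => H k (fun i hi => hk i hi (Finset.notMem_empty i))
    | @insert i1 t hi1t ih =>
      intro k hk u
      by_cases hi1s : i1 ∈ s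
      · -- density argument in the i1-th increment
        set g : Y → ℂ := fun x => mdiffS s (Function.update k i1 x) f u with hg
        have hzero : ∀ x ∈ D i1, g x = 0 := by
          intro x hx
          apply ih
          intro i his hit
          by_cases hii : i = i1
          · subst hii; rwa [Function.update_self]
          · rw [Function.update_of_ne hii]
            exact hk i his (by simp [Finset.mem_insert, hii, hit])
        have hgx : ∀ x, g x = mdiffS (s.erase i1) k (fdiff x f) u := by
          intro x
          rw [hg]
          simp only
          rw [mdiffS_erase' hi1s, Function.update_self,
            mdiffS_congr (k := Function.update k i1 x) (k' := k)
              (fun i hi => Function.update_of_ne (Finset.ne_of_mem_erase hi) _ _)]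
        have hgcont : Continuous g := by
          have hF : Continuous fun p : Y × Y => f (p.2 + p.1) - f p.2 :=
            (hf.comp (continuous_snd.add continuous_fst)).sub (hf.comp continuous_snd)
          have h2 : Continuous fun p : Y × Y =>
              mdiffL ((s.erase i1).toList.map k) ((fun x y => f (y + x) - f y) p.1) p.2 :=
            continuous_mdiffL_param (F := fun x y => f (y + x) - f y) _ hF
          have h3 : Continuous fun x : Y => mdiffS (s.erase i1) k (fdiff x f) u := by
            have := h2.comp (continuous_id.prodMk (continuous_const : Continuous fun _ : Y => u))
            exact this
          rw [funext hgx]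
          exact h3
        have : g = fun _ => (0 : ℂ) :=
          Continuous.ext_on (hD i1 hi1s) hgcont continuous_const hzero
        have hgk : g (k i1) = mdiffS s k f u := by rw [hg]; simp [Function.update_eq_self]
        rw [← hgk, this]
      · -- i1 plays no role
        apply ih
        intro i his hit
        exact hk i his (by
          simp only [Finset.mem_insert, not_or]
          exact ⟨fun h => hi1s (h ▸ his), hit⟩)
  intro k u
  exact claim s k (fun i hi hni => absurd hi hni) u

end Topology

/-- The key algebraic reduction: differencing the functional equation kills all terms
except the `j`-th, whose iterated difference (with increments in the ranges of
`β j - β i`) is then a function of `v` alone. -/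
lemma key {n : ℕ} (β : Fin n → Y →+ Y) (s : Finset (Fin n)) :
    ∀ j ∈ s, ∀ (ψ' : Fin n → Y → ℂ) (B' : Y → ℂ),
      (∀ u v : Y, ∑ i ∈ s, ψ' i (u + β i v) = B' v) →
      ∀ k : Fin n → Y, (∀ i ∈ s.erase j, ∃ y, β j y - β i y = k i) →
      ∃ C : Y → ℂ, (∀ u v : Y, mdiffS (s.erase j) k (ψ' j) (u + β j v) = C v) ∧
        ((∀ y, B' y = 0) → ∀ y, C y = 0) := by
  induction s using Finset.strongInduction with
  | _ s ihs =>
    intro j hj ψ' B' hE k hk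
    by_cases hs : s.erase j = ∅
    · -- base case : s = {j}
      have hsj : s = {j} := by
        rcases (Finset.erase_eq_empty_iff s j).mp hs with h | h
        · exact absurd (h ▸ hj) (Finset.notMem_empty j)
        · exact h
      refine ⟨B', ?_, fun h y => h y⟩
      intro u v
      rw [hs, mdiffS_empty]
      have := hE u v
      rwa [hsj, Finset.sum_singleton] at this
    · obtain ⟨i0, hi0⟩ := Finset.nonempty_iff_ne_empty.mpr hs
      have hi0j : i0 ≠ j := Finset.ne_of_mem_erase hi0
      have hi0s : i0 ∈ s := Finset.mem_of_mem_erase hi0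
      obtain ⟨h, hh⟩ := hk i0 hi0
      set ψ'' : Fin n → Y → ℂ := fun i => fdiff (β i h - β i0 h) (ψ' i) with hψ''
      set B'' : Y → ℂ := fdiff h B' with hB''
      have hE'' : ∀ u v : Y, ∑ i ∈ s.erase i0, ψ'' i (u + β i v) = B'' v := by
        intro u v
        have harg : ∀ i : Fin n, (u + β i v) + (β i h - β i0 h) = (u - β i0 h) + β i (v + h) := by
          intro i; rw [map_add]; abel
        have step : ∀ i : Fin n, ψ'' i (u + β i v)
            = ψ' i ((u - β i0 h) + β i (v + h)) - ψ' i (u + β i v) := by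
          intro i
          simp only [hψ'', fdiff]
          rw [harg i]
        calc ∑ i ∈ s.erase i0, ψ'' i (u + β i v)
            = ∑ i ∈ s.erase i0, (ψ' i ((u - β i0 h) + β i (v + h)) - ψ' i (u + β i v)) := by
              exact Finset.sum_congr rfl fun i _ => step i
          _ = (∑ i ∈ s.erase i0, ψ' i ((u - β i0 h) + β i (v + h)))
              - ∑ i ∈ s.erase i0, ψ' i (u + β i v) := Finset.sum_sub_distrib _ _
          _ = ((∑ i ∈ s, ψ' i ((u - β i0 h) + β i (v + h))) - ψ' i0 ((u - β i0 h) + β i0 (v + h)))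
              - ((∑ i ∈ s, ψ' i (u + β i v)) - ψ' i0 (u + β i0 v)) := by
              rw [Finset.sum_erase_eq_sub hi0s, Finset.sum_erase_eq_sub hi0s]
          _ = B'' v := by
              have harg0 : (u - β i0 h) + β i0 (v + h) = u + β i0 v := by
                rw [map_add]; abel
              rw [harg0, hE, hE, hB'']
              simp [fdiff]
      have hjs' : j ∈ s.erase i0 := Finset.mem_erase.mpr ⟨fun hjj => hi0j hjj.symm, hj⟩
      have hk' : ∀ i ∈ (s.erase i0).erase j, ∃ y, β j y - β i y = k i := by
        intro i hi
        exact hk i (Finset.mem_erase.mpr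
          ⟨(Finset.mem_erase.mp hi).1, Finset.mem_of_mem_erase (Finset.mem_erase.mp hi).2⟩)
      obtain ⟨C, hC1, hC2⟩ :=
        ihs (s.erase i0) (Finset.erase_ssubset hi0s) j hjs' ψ'' B'' hE'' k hk'
      refine ⟨C, ?_, ?_⟩
      · intro u v
        have hψj : fdiff (k i0) (ψ' j) = ψ'' j := by
          simp only [hψ'']
          rw [hh]
        calc mdiffS (s.erase j) k (ψ' j) (u + β j v)
            = mdiffS ((s.erase j).erase i0) k (fdiff (k i0) (ψ' j)) (u + β j v) := by
              rw [mdiffS_erase' hi0]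
          _ = mdiffS ((s.erase i0).erase j) k (ψ'' j) (u + β j v) := by
              rw [Finset.erase_right_comm, hψj]
          _ = C v := hC1 u v
      · intro hB0 y
        apply hC2
        intro y'
        simp [hB'', fdiff, hB0]

end FEAux

/-- Lemma 1: if continuous functions `ψ₁, …, ψₙ` and `B` on a locally compact
Hausdorff abelian topological group `Y` satisfy
`∑ⱼ ψⱼ(u + βⱼ v) = B(v)` for all `u, v`, where the `βⱼ` are continuous
endomorphisms with `(βᵢ - βⱼ)(Y)` dense in `Y` for `i ≠ j`, then each `ψⱼ` is a
polynomial of degree at most `n - 1`; and if moreover `n ≥ 2` and `B ≡ 0`, then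
each `ψⱼ` is a polynomial of degree at most `n - 2`. -/
theorem polynomial_solutions_of_functional_equation
    {Y : Type*} [TopologicalSpace Y] [AddCommGroup Y] [IsTopologicalAddGroup Y]
    [LocallyCompactSpace Y] [T2Space Y]
    {n : ℕ} (β : Fin n → Y →+ Y) (hβ : ∀ j, Continuous (β j))
    (hdense : ∀ i j, i ≠ j → Dense (Set.range fun y => β i y - β j y))
    (ψ : Fin n → Y → ℂ) (hψ : ∀ j, Continuous (ψ j))
    (B : Y → ℂ) (hB : Continuous B)
    (heq : ∀ u v : Y, ∑ j, ψ j (u + β j v) = B v) :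
    (∀ j, IsPolynomialOfDegreeAtMost (n - 1) (ψ j)) ∧
      (2 ≤ n → (∀ y, B y = 0) → ∀ j, IsPolynomialOfDegreeAtMost (n - 2) (ψ j)) := by
  classical
  open FEAux in
  constructor
  · intro j
    have hn : 0 < n := j.pos
    set D : Fin n → Set Y := fun i =>
      if i = j then Set.univ else Set.range (fun y => β j y - β i y) with hD
    have hDdense : ∀ i ∈ (Finset.univ : Finset (Fin n)), Dense (D i) := by
      intro i _
      by_cases hij : i = j
      · simp [hD, hij, dense_univ]
      · simpa [hD, hij] using hdense j i (fun hji => hij hji.symm)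
    have H : ∀ k : Fin n → Y, (∀ i ∈ (Finset.univ : Finset (Fin n)), k i ∈ D i) →
        ∀ u, mdiffS Finset.univ k (ψ j) u = 0 := by
      intro k hk u
      have hk' : ∀ i ∈ (Finset.univ : Finset (Fin n)).erase j, ∃ y, β j y - β i y = k i := by
        intro i hi
        have hij : i ≠ j := Finset.ne_of_mem_erase hi
        have := hk i (Finset.mem_univ i)
        rw [hD] at this
        simp only [if_neg hij] at this
        exact this
      obtain ⟨C, hC, -⟩ := FEAux.key β Finset.univ j (Finset.mem_univ j) ψ B heq k hk'
      have hconst : ∀ u' : Y, mdiffS (Finset.univ.erase j) k (ψ j) u' = C 0 := by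
        intro u'
        have := hC u' 0
        rwa [map_zero, add_zero] at this
      rw [mdiffS_erase (Finset.mem_univ j) k (ψ j)]
      show mdiffS (Finset.univ.erase j) k (ψ j) (u + k j)
        - mdiffS (Finset.univ.erase j) k (ψ j) u = 0
      rw [hconst, hconst, sub_self]
    have hall := FEAux.ext_dense Finset.univ D hDdense (hψ j) H
    intro h y
    have := hall (fun _ => h) y
    rw [mdiffS_const] at this
    rw [Finset.card_univ, Fintype.card_fin] at this
    have hnn : n - 1 + 1 = n := Nat.succ_pred_eq_of_pos hn
    rwa [hnn]
  · intro hn hB0 j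
    set D : Fin n → Set Y := fun i =>
      if i = j then Set.univ else Set.range (fun y => β j y - β i y) with hD
    have hDdense : ∀ i ∈ (Finset.univ : Finset (Fin n)).erase j, Dense (D i) := by
      intro i hi
      have hij : i ≠ j := Finset.ne_of_mem_erase hi
      simpa [hD, hij] using hdense j i (fun hji => hij hji.symm)
    have H : ∀ k : Fin n → Y, (∀ i ∈ (Finset.univ : Finset (Fin n)).erase j, k i ∈ D i) →
        ∀ u, mdiffS (Finset.univ.erase j) k (ψ j) u = 0 := by
      intro k hk u
      have hk' : ∀ i ∈ (Finset.univ : Finset (Fin n)).erase j, ∃ y, β j y - β i y = k i := by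
        intro i hi
        have hij : i ≠ j := Finset.ne_of_mem_erase hi
        have := hk i hi
        rw [hD] at this
        simp only [if_neg hij] at this
        exact this
      obtain ⟨C, hC, hC0⟩ := FEAux.key β Finset.univ j (Finset.mem_univ j) ψ B heq k hk'
      have := hC u 0
      rw [map_zero, add_zero, hC0 hB0 0] at this
      exact this
    have hall := FEAux.ext_dense (Finset.univ.erase j) D hDdense (hψ j) H
    intro h y
    have := hall (fun _ => h) y
    rw [mdiffS_const] at this
    rw [Finset.card_erase_of_mem (Finset.mem_univ j), Finset.card_univ, Fintype.card_fin] at this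
    have hnn : n - 2 + 1 = n - 1 := by omega
    rwa [hnn]
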